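/- For any vertex v, sets of vertices U, T, and player i: there exists a memoryless strategy σ for player i with v ⇒_{σ,U} T if and only if there exists an arbitrary (history-dependent) strategy σ for player i with v ⇒_{σ,U} T, where v ⇒_{σ,U} T means every play from v consistent with σ reaches T while staying in U before that. -/

import Mathlib

universe u

/-- A parity game: a directed graph with a total edge relation, a priority
function and an owner function (`true` = player even, `false` = player odd). -/
structure ParityGame (V : Type u) where
  edge : V → V → Prop
  total : ∀ v, ∃ w, edge v w
  prio : V → ℕ
  owner : V → Bool

namespace ParityGame

variable {V : Type u}

/-- A (history-dependent) strategy: given the history of previously visited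
vertices and the current vertex, choose a successor.  Only the values at
vertices owned by the given player matter. -/
abbrev Strategy (V : Type u) : Type u := List V → V → V

variable (G : ParityGame V)

/-- A strategy is valid for player `i` if it always proposes edges. -/
def ValidStrategy (i : Bool) (σ : Strategy V) : Prop :=
  ∀ h v, G.owner v = i → G.edge v (σ h v)

/-- A memoryless strategy only depends on the current vertex. -/
def Memoryless (σ : Strategy V) : Prop := ∀ h h' v, σ h v = σ h' v

/-- An (infinite) play is an infinite path in the game graph. -/
def IsPlay (p : ℕ → V) : Prop := ∀ n, G.edge (p n) (p (n + 1))

/-- The history of a play before position `n`. -/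
def hist (p : ℕ → V) (n : ℕ) : List V := List.ofFn (fun k : Fin n => p k)

/-- A play is consistent with a strategy `σ` of player `i` if at every vertex
owned by `i` the play follows `σ`. -/
def Consistent (i : Bool) (σ : Strategy V) (p : ℕ → V) : Prop :=
  ∀ n, G.owner (p n) = i → p (n + 1) = σ (hist p n) (p n)

/-- `G.ForcesVia i σ v U T`: every play from `v` consistent with `σ` reaches
`T`, all earlier vertices lying in `U`. -/
def ForcesVia (i : Bool) (σ : Strategy V) (v : V) (U T : Set V) : Prop :=
  ∀ p : ℕ → V, G.IsPlay p → G.Consistent i σ p → p 0 = v →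
    ∃ n, p n ∈ T ∧ ∀ j < n, p j ∈ U

/-- `v ⇒_{i,U} T`: player `i` has a memoryless strategy forcing every
consistent play from `v` to reach `T` while staying in `U` beforehand. -/
def Forces (i : Bool) (v : V) (U T : Set V) : Prop :=
  ∃ σ : Strategy V, G.ValidStrategy i σ ∧ Memoryless σ ∧ G.ForcesVia i σ v U T

/-- Every play from `v` consistent with `σ` stays in `U` forever. -/
def DivergesVia (i : Bool) (σ : Strategy V) (v : V) (U : Set V) : Prop :=
  ∀ p : ℕ → V, G.IsPlay p → G.Consistent i σ p → p 0 = v → ∀ n, p n ∈ U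

/-- `v ⇒^ω_{i,U}`: player `i` has a memoryless strategy keeping all
consistent plays from `v` forever inside `U`. -/
def Diverges (i : Bool) (v : V) (U : Set V) : Prop :=
  ∃ σ : Strategy V, G.ValidStrategy i σ ∧ Memoryless σ ∧ G.DivergesVia i σ v U

/-- Priority `k` occurs infinitely often on the play `p`. -/
def InfOften (p : ℕ → V) (k : ℕ) : Prop := ∀ N, ∃ n, N ≤ n ∧ G.prio (p n) = k

/-- Player even wins a play iff the least priority occurring infinitely often
is even. -/
def EvenWinsPlay (p : ℕ → V) : Prop := Even (sInf {k | G.InfOften p k})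

/-- Player `i` wins the play `p`. -/
def WinsPlay (i : Bool) (p : ℕ → V) : Prop := G.EvenWinsPlay p ↔ i = true

/-- `σ` is a winning strategy for player `i` from `v`. -/
def WinningFrom (i : Bool) (σ : Strategy V) (v : V) : Prop :=
  ∀ p : ℕ → V, G.IsPlay p → G.Consistent i σ p → p 0 = v → G.WinsPlay i p

end ParityGame


namespace MemAux

open ParityGame

variable {V : Type u} (G : ParityGame V) (U T : Set V) (i : Bool)

/-- One step of the attractor construction. -/
def astep (X : Set V) : Set V :=
  T ∪ {w ∈ U | if G.owner w = i then ∃ u, G.edge w u ∧ u ∈ X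
               else ∀ u, G.edge w u → u ∈ X}

lemma astep_mono {X Y : Set V} (h : X ⊆ Y) : astep G U T i X ⊆ astep G U T i Y := by
  intro w hw
  rcases hw with hw | ⟨hwU, hc⟩
  · exact Or.inl hw
  · refine Or.inr ⟨hwU, ?_⟩
    split at hc
    case isTrue ho =>
      simp only [if_pos ho]
      exact ⟨hc.choose, hc.choose_spec.1, h hc.choose_spec.2⟩
    case isFalse ho =>
      simp only [if_neg ho]
      exact fun u hu => h (hc u hu)

def attr : ℕ → Set V
  | 0 => ∅
  | n + 1 => astep G U T i (attr n)

lemma attr_mono : Monotone (attr G U T i) := by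
  have h : ∀ n, attr G U T i n ⊆ attr G U T i (n+1) := by
    intro n
    induction n with
    | zero => simp [attr]
    | succ m ih => exact astep_mono G U T i ih
  exact monotone_nat_of_le_succ h

/-- The attractor. -/
def Atr : Set V := ⋃ n, attr G U T i n

noncomputable def rank (w : V) : ℕ := sInf {n | w ∈ attr G U T i n}

lemma mem_attr_rank {w : V} (hw : w ∈ Atr G U T i) : w ∈ attr G U T i (rank G U T i w) := by
  rcases Set.mem_iUnion.1 hw with ⟨n, hn⟩
  exact Nat.sInf_mem (⟨n, hn⟩ : Set.Nonempty {n | w ∈ attr G U T i n})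

lemma rank_le {w : V} {n : ℕ} (hw : w ∈ attr G U T i n) : rank G U T i w ≤ n :=
  Nat.sInf_le hw

lemma rank_pos {w : V} (hw : w ∈ Atr G U T i) : 0 < rank G U T i w := by
  rcases Nat.eq_zero_or_pos (rank G U T i w) with h | h
  · have := mem_attr_rank G U T i hw
    rw [h] at this
    exact absurd this (by simp [attr])
  · exact h

end MemAux

-- continuing inside namespace MemAux (appended for testing)
namespace MemAux

open ParityGame Classical

variable {V : Type u} (G : ParityGame V) (U T : Set V) (i : Bool)

/-- Build a play from a step function. -/
noncomputable def build (f : List V → V → V) (v : V) : ℕ → V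
  | 0 => v
  | n + 1 => f (List.ofFn fun k : Fin n => build f v k) (build f v n)

lemma build_succ (f : List V → V → V) (v : V) (n : ℕ) :
    build f v (n + 1) = f (ParityGame.hist (build f v) n) (build f v n) := by
  rw [build]; rfl

/-- Completeness: if some strategy forces reaching `T` inside `U`, the start
vertex lies in the attractor. -/
lemma mem_Atr_of_forces [Fintype V] {σ : Strategy V} {v : V}
    (hval : G.ValidStrategy i σ) (hf : G.ForcesVia i σ v U T) : v ∈ Atr G U T i := by
  by_contra hv
  classical
  -- opponent step function
  set f : List V → V → V := fun h w =>
    if G.owner w = i then σ h w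
    else if h2 : ∃ u, G.edge w u ∧ u ∉ Atr G U T i then h2.choose
    else (G.total w).choose with hfdef
  set p : ℕ → V := build f v with hp
  have hplay : G.IsPlay p := by
    intro n
    rw [hp, build_succ]
    by_cases ho : G.owner (build f v n) = i
    · have ho' := ho
      simp only [hfdef] at ho' ⊢
      simp only [if_pos ho']
      exact hval _ _ ho
    · have ho' := ho
      simp only [hfdef] at ho' ⊢
      simp only [if_neg ho']
      split
      next h2 => exact h2.choose_spec.1
      next => exact (G.total _).choose_spec
  have hcons : G.Consistent i σ p := by
    intro n ho
    rw [hp, build_succ]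
    have ho' := ho
    simp only [hp, hfdef] at ho' ⊢
    simp only [if_pos ho']
  -- key invariant
  have key : ∀ n, (∀ j < n, p j ∈ U) → p n ∉ Atr G U T i := by
    intro n
    induction n with
    | zero => intro _; simpa [hp, build] using hv
    | succ m ih =>
      intro hU
      have hpm : p m ∉ Atr G U T i := ih fun j hj => hU j (Nat.lt_succ_of_lt hj)
      have hpmU : p m ∈ U := hU m (Nat.lt_succ_self m)
      intro hmem
      rcases Set.mem_iUnion.1 hmem with ⟨N, hN⟩
      -- p (m+1) ∈ attr N; show p m ∈ attr (N+1), contradiction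
      have hstep : p m ∈ attr G U T i (N + 1) := by
        refine Or.inr ⟨hpmU, ?_⟩
        by_cases ho : G.owner (p m) = i
        · rw [if_pos ho]
          refine ⟨p (m+1), hplay m, ?_⟩
          -- p (m+1) = σ ... but anyway it's in attr N
          exact hN
        · rw [if_neg ho]
          -- all successors must be outside Atr? contradiction route:
          exact absurd hN (by
            have : p (m+1) ∉ Atr G U T i := by
              rw [hp, build_succ]
              have ho' := ho
              simp only [hp, hfdef] at ho' ⊢
              simp only [if_neg ho']
              split
              next h2 => exact h2.choose_spec.2
              next h2 =>
                -- all successors in Atr: then p m ∈ Atr, contradiction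
                push_neg at h2
                exfalso
                -- bound ranks of successors
                have hall : ∀ u, G.edge (p m) u → u ∈ Atr G U T i := h2
                set Nb := Finset.univ.sup (rank G U T i) with hNb
                have : p m ∈ attr G U T i (Nb + 1) := by
                  refine Or.inr ⟨hpmU, ?_⟩
                  rw [if_neg ho]
                  intro u hu
                  exact attr_mono G U T i (Finset.le_sup (Finset.mem_univ u))
                    (mem_attr_rank G U T i (hall u hu))
                exact hpm (Set.mem_iUnion.2 ⟨Nb + 1, this⟩)
            intro hc
            exact this (Set.mem_iUnion.2 ⟨N, hc⟩))
      exact hpm (Set.mem_iUnion.2 ⟨N + 1, hstep⟩)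
  rcases hf p hplay hcons (by simp [hp, build]) with ⟨n, hnT, hnU⟩
  have := key n hnU
  exact this (Set.mem_iUnion.2 ⟨1, Or.inl hnT⟩)

end MemAux

namespace MemAux

open ParityGame Classical

variable {V : Type u} (G : ParityGame V) (U T : Set V) (i : Bool)

/-- The memoryless attractor strategy: move to a successor of smaller rank. -/
noncomputable def tau : Strategy V := fun _ w =>
  if h : ∃ u, G.edge w u ∧ u ∈ Atr G U T i ∧ rank G U T i u < rank G U T i w
  then h.choose else (G.total w).choose

lemma tau_valid : G.ValidStrategy i (tau G U T i) := by
  intro h w _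
  unfold tau
  split
  next h2 => exact h2.choose_spec.1
  next => exact (G.total w).choose_spec

lemma tau_memoryless : Memoryless (tau G U T i) := fun _ _ _ => rfl

/-- Unfolding attractor membership for a vertex not in `T`. -/
lemma attr_unfold {w : V} (hw : w ∈ Atr G U T i) (hwT : w ∉ T) :
    w ∈ U ∧
      (if G.owner w = i then ∃ u, G.edge w u ∧ u ∈ attr G U T i (rank G U T i w - 1)
       else ∀ u, G.edge w u → u ∈ attr G U T i (rank G U T i w - 1)) := by
  have h1 := mem_attr_rank G U T i hw
  have h2 := rank_pos G U T i hw
  obtain ⟨m, hm⟩ : ∃ m, rank G U T i w = m + 1 := ⟨rank G U T i w - 1, by omega⟩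
  rw [hm] at h1
  rcases h1 with h1 | ⟨h1U, h1c⟩
  · exact absurd h1 hwT
  · rw [hm]
    simpa using ⟨h1U, h1c⟩

lemma tau_forces [Fintype V] {v : V} (hv : v ∈ Atr G U T i) :
    G.ForcesVia i (tau G U T i) v U T := by
  classical
  -- strong induction on rank
  suffices H : ∀ m : ℕ, ∀ p : ℕ → V, G.IsPlay p → G.Consistent i (tau G U T i) p →
      p 0 ∈ Atr G U T i → rank G U T i (p 0) ≤ m →
      ∃ n, p n ∈ T ∧ ∀ j < n, p j ∈ U by
    intro p hp hc h0
    exact H (rank G U T i (p 0)) p hp hc (h0 ▸ hv) le_rfl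
  intro m
  induction m with
  | zero =>
    intro p _ _ h0 hr
    exact absurd (Nat.lt_of_lt_of_le (rank_pos G U T i h0) hr) (by omega)
  | succ m ih =>
    intro p hp hc h0 hr
    by_cases hT : p 0 ∈ T
    · exact ⟨0, hT, by omega⟩
    · obtain ⟨hU0, hcond⟩ := attr_unfold G U T i h0 hT
      have hpos := rank_pos G U T i h0
      -- p 1 ∈ attr (rank (p 0) - 1)
      have h1 : p 1 ∈ attr G U T i (rank G U T i (p 0) - 1) := by
        by_cases ho : G.owner (p 0) = i
        · rw [if_pos ho] at hcond
          have hex : ∃ u, G.edge (p 0) u ∧ u ∈ Atr G U T i ∧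
              rank G U T i u < rank G U T i (p 0) := by
            obtain ⟨u, hu1, hu2⟩ := hcond
            exact ⟨u, hu1, Set.mem_iUnion.2 ⟨_, hu2⟩,
              lt_of_le_of_lt (rank_le G U T i hu2) (by omega)⟩
          have hp1 : p 1 = tau G U T i (ParityGame.hist p 0) (p 0) := hc 0 ho
          rw [hp1]
          unfold tau
          rw [dif_pos hex]
          have hs := hex.choose_spec
          exact attr_mono G U T i (by omega : rank G U T i hex.choose ≤
              rank G U T i (p 0) - 1) (mem_attr_rank G U T i hs.2.1)
        · rw [if_neg ho] at hcond
          exact hcond (p 1) (hp 0)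
      -- shifted play
      set q : ℕ → V := fun k => p (k + 1) with hq
      have hq0 : q 0 ∈ Atr G U T i := Set.mem_iUnion.2 ⟨_, h1⟩
      have hqr : rank G U T i (q 0) ≤ m := le_trans (rank_le G U T i h1) (by omega)
      have hqplay : G.IsPlay q := fun n => hp (n + 1)
      have hqcons : G.Consistent i (tau G U T i) q := by
        intro n ho
        have := hc (n + 1) ho
        exact this
      obtain ⟨n, hnT, hnU⟩ := ih q hqplay hqcons hq0 hqr
      refine ⟨n + 1, hnT, ?_⟩
      intro j hj
      cases j with
      | zero => exact hU0
      | succ k => exact hnU k (by omega)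

end MemAux


/-- Forcing with a memoryless strategy is equivalent to forcing with an
arbitrary (history-dependent) strategy. -/
theorem forces_memoryless_iff {V : Type u} [Fintype V] (G : ParityGame V)
    (v : V) (U T : Set V) (i : Bool) :
    (∃ σ : ParityGame.Strategy V, G.ValidStrategy i σ ∧ ParityGame.Memoryless σ ∧
        G.ForcesVia i σ v U T) ↔
    (∃ σ : ParityGame.Strategy V, G.ValidStrategy i σ ∧ G.ForcesVia i σ v U T) := by
  constructor
  · rintro ⟨σ, h1, _, h3⟩
    exact ⟨σ, h1, h3⟩
  · rintro ⟨σ, h1, h2⟩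
    have hv := MemAux.mem_Atr_of_forces G U T i h1 h2
    exact ⟨MemAux.tau G U T i, MemAux.tau_valid G U T i,
      MemAux.tau_memoryless G U T i, MemAux.tau_forces G U T i hv⟩
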